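/- Let c ∈ SL₃(ℂ), and consider the ℂ-linear functionals on the 6-dimensional space 𝔟₃ of upper-triangular 3×3 complex matrices X (with diagonal entries x₁₁, x₂₂, x₃₃) given by f₁(X) = (c⁻¹Xc)₂₁, f₂(X) = (c⁻¹(X − x₂₂·1)c)₂₂, and h₂(X) = (c⁻¹(X − x₁₁·1))₃₂. Then: (a) if c is upper triangular, the functionals f₁, f₂, h₂ vanish identically on 𝔟₃; (b) if c is not upper triangular, the solution space {X ∈ 𝔟₃ : f₁(X) = f₂(X) = h₂(X) = 0} is a ℂ-linear subspace of dimension exactly 4, i.e. of codimension 2 in 𝔟₃. -/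

import Mathlib

/-- The Borel subalgebra `𝔟₃` of upper-triangular `3 × 3` complex matrices, as a submodule
of the space of all matrices. -/
noncomputable def borel3 : Submodule ℂ (Matrix (Fin 3) (Fin 3) ℂ) where
  carrier := {X | ∀ i j, j < i → X i j = 0}
  add_mem' := by
    intro a b ha hb i j h
    show a i j + b i j = 0
    rw [ha i j h, hb i j h, add_zero]
  zero_mem' := fun _ _ _ => rfl
  smul_mem' := by
    intro t a ha i j h
    show t * a i j = 0
    rw [ha i j h, mul_zero]

/-- `f₁(X) = (c⁻¹Xc)₂₁`. -/
noncomputable def f1 (c X : Matrix (Fin 3) (Fin 3) ℂ) : ℂ := (c⁻¹ * X * c) 1 0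

/-- `f₂(X) = (c⁻¹(X − x₂₂·1)c)₂₂`. -/
noncomputable def f2 (c X : Matrix (Fin 3) (Fin 3) ℂ) : ℂ :=
  (c⁻¹ * (X - X 1 1 • (1 : Matrix (Fin 3) (Fin 3) ℂ)) * c) 1 1

/-- `h₂(X) = (c⁻¹(X − x₁₁·1))₃₂`. -/
noncomputable def h2 (c X : Matrix (Fin 3) (Fin 3) ℂ) : ℂ :=
  (c⁻¹ * (X - X 0 0 • (1 : Matrix (Fin 3) (Fin 3) ℂ))) 2 1

-- ### auxiliary material

local notation "Mat3" => Matrix (Fin 3) (Fin 3) ℂ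

/-- Entry extraction as a linear map. -/
noncomputable def entryLM (i j : Fin 3) : Mat3 →ₗ[ℂ] ℂ where
  toFun X := X i j
  map_add' _ _ := rfl
  map_smul' _ _ := rfl

noncomputable def subDiag (i : Fin 3) : Mat3 →ₗ[ℂ] Mat3 :=
  LinearMap.id - (entryLM i i).smulRight (1 : Mat3)

noncomputable def F1 (c : Mat3) : Mat3 →ₗ[ℂ] ℂ :=
  (entryLM 1 0).comp ((LinearMap.mulRight ℂ c).comp (LinearMap.mulLeft ℂ c⁻¹))

noncomputable def F2 (c : Mat3) : Mat3 →ₗ[ℂ] ℂ :=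
  (entryLM 1 1).comp ((LinearMap.mulRight ℂ c).comp
    ((LinearMap.mulLeft ℂ c⁻¹).comp (subDiag 1)))

noncomputable def H2 (c : Mat3) : Mat3 →ₗ[ℂ] ℂ :=
  (entryLM 2 1).comp ((LinearMap.mulLeft ℂ c⁻¹).comp (subDiag 0))

lemma F1_apply (c X : Mat3) : F1 c X = f1 c X := rfl
lemma F2_apply (c X : Mat3) : F2 c X = f2 c X := rfl
lemma H2_apply (c X : Mat3) : H2 c X = h2 c X := rfl

lemma cinv (c : Mat3) (hc : c.det = 1) : c⁻¹ = c.adjugate := by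
  rw [Matrix.inv_def, hc]; simp

section eval
variable (c X : Matrix (Fin 3) (Fin 3) ℂ) (hc : c.det = 1)
  (h10 : X 1 0 = 0) (h20 : X 2 0 = 0) (h21 : X 2 1 = 0)

set_option linter.unusedSectionVars false

include hc h10 h20 h21 in
lemma f1_eq : f1 c X =
    -(c 1 0 * c 2 2 - c 1 2 * c 2 0) *
        (c 0 0 * X 0 0 + c 1 0 * X 0 1 + c 2 0 * X 0 2)
      + (c 0 0 * c 2 2 - c 0 2 * c 2 0) * (c 1 0 * X 1 1 + c 2 0 * X 1 2)
      - (c 0 0 * c 1 2 - c 0 2 * c 1 0) * (c 2 0 * X 2 2) := by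
  rw [f1, cinv c hc, Matrix.adjugate_fin_three]
  simp only [Matrix.mul_apply, Fin.sum_univ_three, Matrix.of_apply, Matrix.cons_val',
    Matrix.cons_val_zero, Matrix.cons_val_one, Matrix.head_cons, Matrix.empty_val',
    Matrix.cons_val_fin_one, Matrix.head_fin_const, Matrix.cons_val_two, Matrix.tail_cons,
    h10, h20, h21]
  ring

include hc h10 h20 h21 in
lemma f2_eq : f2 c X =
    -(c 1 0 * c 2 2 - c 1 2 * c 2 0) *
        (c 0 1 * X 0 0 + c 1 1 * X 0 1 + c 2 1 * X 0 2 - c 0 1 * X 1 1)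
      + (c 0 0 * c 2 2 - c 0 2 * c 2 0) * (c 2 1 * X 1 2)
      + (c 0 0 * c 1 2 - c 0 2 * c 1 0) * (c 2 1 * (X 1 1 - X 2 2)) := by
  rw [f2, cinv c hc, Matrix.adjugate_fin_three, Matrix.one_fin_three]
  simp only [Matrix.mul_apply, Fin.sum_univ_three, Matrix.sub_apply, Matrix.smul_apply,
    Matrix.of_apply, Matrix.cons_val', Matrix.cons_val_zero, Matrix.cons_val_one,
    Matrix.head_cons, Matrix.empty_val', Matrix.cons_val_fin_one, Matrix.head_fin_const,
    Matrix.cons_val_two, Matrix.tail_cons, smul_eq_mul, h10, h20, h21]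
  ring

include hc h10 h20 h21 in
lemma h2_eq : h2 c X =
    (c 0 0 * c 2 1 - c 0 1 * c 2 0) * (X 0 0 - X 1 1)
      + (c 1 0 * c 2 1 - c 1 1 * c 2 0) * X 0 1 := by
  rw [h2, cinv c hc, Matrix.adjugate_fin_three, Matrix.one_fin_three]
  simp only [Matrix.mul_apply, Fin.sum_univ_three, Matrix.sub_apply, Matrix.smul_apply,
    Matrix.of_apply, Matrix.cons_val', Matrix.cons_val_zero, Matrix.cons_val_one,
    Matrix.head_cons, Matrix.empty_val', Matrix.cons_val_fin_one, Matrix.head_fin_const,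
    Matrix.cons_val_two, Matrix.tail_cons, smul_eq_mul, h10, h20, h21]
  ring

include hc h10 h20 h21 in
/-- The fundamental linear relation among the three functionals on `𝔟₃`. -/
lemma relation :
    c 2 1 * f1 c X - c 2 0 * f2 c X
      + (c 1 0 * c 2 2 - c 1 2 * c 2 0) * h2 c X = 0 := by
  rw [f1_eq c X hc h10 h20 h21, f2_eq c X hc h10 h20 h21, h2_eq c X hc h10 h20 h21]
  ring
end eval

/-- Sums of squared moduli vanish only if each term does. -/
lemma conj_sum_ne (u v w : ℂ) (h : ¬(u = 0 ∧ v = 0 ∧ w = 0)) :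
    (starRingEnd ℂ) u * u + (starRingEnd ℂ) v * v + (starRingEnd ℂ) w * w ≠ 0 := by
  intro h0
  have h0' : (Complex.normSq u : ℂ) + Complex.normSq v + Complex.normSq w = 0 := by
    rw [Complex.normSq_eq_conj_mul_self, Complex.normSq_eq_conj_mul_self,
      Complex.normSq_eq_conj_mul_self]
    exact h0
  have hre : Complex.normSq u + Complex.normSq v + Complex.normSq w = 0 := by
    exact_mod_cast congrArg Complex.re h0'
  have hu : Complex.normSq u = 0 ∧ Complex.normSq v = 0 ∧ Complex.normSq w = 0 := by
    constructor
    · nlinarith [Complex.normSq_nonneg u, Complex.normSq_nonneg v, Complex.normSq_nonneg w]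
    constructor
    · nlinarith [Complex.normSq_nonneg u, Complex.normSq_nonneg v, Complex.normSq_nonneg w]
    · nlinarith [Complex.normSq_nonneg u, Complex.normSq_nonneg v, Complex.normSq_nonneg w]
  exact h ⟨Complex.normSq_eq_zero.mp hu.1, Complex.normSq_eq_zero.mp hu.2.1,
    Complex.normSq_eq_zero.mp hu.2.2⟩

/-- Cramer-style criterion for surjectivity onto `ℂ × ℂ`. -/
lemma surj_of_det {M : Type*} [AddCommGroup M] [Module ℂ M]
    (L1 L2 : M →ₗ[ℂ] ℂ) (x y : M)
    (hD : L1 x * L2 y - L1 y * L2 x ≠ 0) :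
    Function.Surjective (L1.prod L2) := by
  rintro ⟨p, q⟩
  set D := L1 x * L2 y - L1 y * L2 x with hDdef
  refine ⟨((p * L2 y - q * L1 y) / D) • x + ((q * L1 x - p * L2 x) / D) • y, ?_⟩
  simp only [LinearMap.prod_apply, Pi.prod, Function.prod, map_add, map_smul, smul_eq_mul, Prod.smul_mk,
    Prod.mk_add_mk, Prod.mk.injEq]
  constructor <;> field_simp <;> ring

lemma finrank_borel3 : Module.finrank ℂ borel3 = 6 := by
  classical
  let L : Mat3 →ₗ[ℂ] (Fin 3 → ℂ) := LinearMap.pi ![entryLM 1 0, entryLM 2 0, entryLM 2 1]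
  have hker : LinearMap.ker L = borel3 := by
    ext X
    constructor
    · intro hX i j hij
      have e0 : X 1 0 = 0 := congrFun (LinearMap.mem_ker.mp hX) 0
      have e1 : X 2 0 = 0 := congrFun (LinearMap.mem_ker.mp hX) 1
      have e2 : X 2 1 = 0 := congrFun (LinearMap.mem_ker.mp hX) 2
      fin_cases i <;> fin_cases j <;> simp_all
    · intro h
      rw [LinearMap.mem_ker]
      funext i
      fin_cases i
      · exact h 1 0 (by decide)
      · exact h 2 0 (by decide)
      · exact h 2 1 (by decide)
  have hsurj : Function.Surjective L := by
    intro v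
    refine ⟨!![0,0,0; v 0,0,0; v 1,v 2,0], ?_⟩
    funext i
    fin_cases i <;> simp [L, entryLM] <;> rfl
  have h1 := LinearMap.finrank_range_add_finrank_ker L
  rw [LinearMap.range_eq_top.mpr hsurj, hker] at h1
  have h2 : Module.finrank ℂ Mat3 = 9 := by
    simp [Module.finrank_matrix]
  have h3 : Module.finrank ℂ (⊤ : Submodule ℂ (Fin 3 → ℂ)) = 3 := by
    simp
  omega

set_option synthInstance.maxHeartbeats 1000000 in
set_option maxHeartbeats 1000000 in
/-- The common plumbing: if two of the functionals (bundled as `G1`, `G2`) cut out the same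
set on `𝔟₃` as all three, and are jointly surjective, the solution space has dimension `4`. -/
lemma dim_four (c : Mat3) (G1 G2 : Mat3 →ₗ[ℂ] ℂ)
    (hiff : ∀ X ∈ borel3, (G1 X = 0 ∧ G2 X = 0) ↔
      (f1 c X = 0 ∧ f2 c X = 0 ∧ h2 c X = 0))
    (x y : Mat3) (hx : x ∈ borel3) (hy : y ∈ borel3)
    (hD : G1 x * G2 y - G1 y * G2 x ≠ 0) :
    ∃ S : Submodule ℂ Mat3,
      (S : Set Mat3) = {X | X ∈ borel3 ∧ f1 c X = 0 ∧ f2 c X = 0 ∧ h2 c X = 0} ∧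
      Module.finrank ℂ S = 4 := by
  classical
  set S : Submodule ℂ Mat3 :=
    borel3 ⊓ LinearMap.ker G1 ⊓ LinearMap.ker G2 with hS
  refine ⟨S, ?_, ?_⟩
  · ext X
    simp only [hS, Submodule.mem_inf, LinearMap.mem_ker, SetLike.mem_coe, Set.mem_setOf_eq]
    constructor
    · rintro ⟨⟨hb, h1⟩, h2⟩
      exact ⟨hb, (hiff X hb).mp ⟨h1, h2⟩⟩
    · rintro ⟨hb, h⟩
      obtain ⟨h1, h2⟩ := (hiff X hb).mpr h
      exact ⟨⟨hb, h1⟩, h2⟩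
  · have hle : S ≤ borel3 := le_trans inf_le_left inf_le_left
    set φ : borel3 →ₗ[ℂ] ℂ × ℂ :=
      (G1.comp borel3.subtype).prod (G2.comp borel3.subtype) with hφ
    have hkerφ : LinearMap.ker φ = S.comap borel3.subtype := by
      ext ⟨X, hX⟩
      simp [hφ, hS, LinearMap.mem_ker, Prod.ext_iff, Submodule.mem_comap, Submodule.mem_inf,
        Prod.mk_eq_zero, hX, and_assoc]
    have hsurj : Function.Surjective φ := by
      apply surj_of_det (G1.comp borel3.subtype) (G2.comp borel3.subtype) ⟨x, hx⟩ ⟨y, hy⟩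
      simpa using hD
    have h1 := LinearMap.finrank_range_add_finrank_ker φ
    rw [LinearMap.range_eq_top.mpr hsurj, hkerφ] at h1
    have h2 : Module.finrank ℂ (⊤ : Submodule ℂ (ℂ × ℂ)) = 2 := by simp
    have h3 : Module.finrank ℂ (S.comap borel3.subtype) = Module.finrank ℂ S :=
      (Submodule.comapSubtypeEquivOfLe hle).finrank_eq
    rw [h2, h3, finrank_borel3] at h1
    omega

lemma mem_borel3 (X : Mat3) (e1 : X 1 0 = 0) (e2 : X 2 0 = 0) (e3 : X 2 1 = 0) :
    X ∈ borel3 := by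
  intro i j hij
  fin_cases i <;> fin_cases j <;> simp_all [Fin.lt_def] <;> omega

/-- **Fibers of the projection of the variety `Z ⊂ 𝔟₃ × SL₃` to `SL₃`:**
(a) if `c` is upper triangular, the functionals `f₁, f₂, h₂` vanish identically on `𝔟₃`;
(b) otherwise the solution space `{X ∈ 𝔟₃ : f₁(X) = f₂(X) = h₂(X) = 0}` is a ℂ-linear
subspace of dimension exactly `4` (codimension `2` in the 6-dimensional space `𝔟₃`). -/
theorem fibers_of_Z_over_SL3 (c : Matrix (Fin 3) (Fin 3) ℂ) (hc : c.det = 1) :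
    ((∀ i j : Fin 3, j < i → c i j = 0) →
      ∀ X ∈ borel3, f1 c X = 0 ∧ f2 c X = 0 ∧ h2 c X = 0) ∧
    (¬ (∀ i j : Fin 3, j < i → c i j = 0) →
      ∃ S : Submodule ℂ (Matrix (Fin 3) (Fin 3) ℂ),
        (S : Set (Matrix (Fin 3) (Fin 3) ℂ))
            = {X | X ∈ borel3 ∧ f1 c X = 0 ∧ f2 c X = 0 ∧ h2 c X = 0} ∧
        Module.finrank ℂ S = 4) := by
  constructor
  · -- part (a)
    intro hUT X hX
    have e10 : X 1 0 = 0 := hX 1 0 (by decide)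
    have e20 : X 2 0 = 0 := hX 2 0 (by decide)
    have e21 : X 2 1 = 0 := hX 2 1 (by decide)
    have g10 : c 1 0 = 0 := hUT 1 0 (by decide)
    have g20 : c 2 0 = 0 := hUT 2 0 (by decide)
    have g21 : c 2 1 = 0 := hUT 2 1 (by decide)
    refine ⟨?_, ?_, ?_⟩
    · rw [f1_eq c X hc e10 e20 e21, g10, g20]; ring
    · rw [f2_eq c X hc e10 e20 e21, g10, g20, g21]; ring
    · rw [h2_eq c X hc e10 e20 e21, g10, g20, g21]; ring
  · -- part (b)
    intro hUT
    have hd := hc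
    rw [Matrix.det_fin_three] at hd
    have huvw : ¬((c 1 0 * c 2 2 - c 1 2 * c 2 0) = 0 ∧ (c 0 0 * c 2 2 - c 0 2 * c 2 0) = 0
        ∧ (c 0 0 * c 1 2 - c 0 2 * c 1 0) = 0) := by
      rintro ⟨hu, hv, hw⟩
      exact one_ne_zero (α := ℂ)
        (by linear_combination -hd - c 0 1 * hu + c 1 1 * hv - c 2 1 * hw)
    by_cases h20 : c 2 0 = 0
    · by_cases h21 : c 2 1 = 0
      · -- Case 3 : c 1 0 ≠ 0, pair (f1, f2)
        have h10 : c 1 0 ≠ 0 := fun h10 => hUT (mem_borel3 c h10 h20 h21)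
        have hm : (c 0 0 * c 1 1 - c 0 1 * c 1 0) * c 2 2 = 1 := by
          linear_combination hd + (c 0 0 * c 1 2 - c 0 2 * c 1 0) * h21
            + (c 0 2 * c 1 1 - c 0 1 * c 1 2) * h20
        have hc22 : c 2 2 ≠ 0 := right_ne_zero_of_mul_eq_one hm
        have hmne : (c 0 0 * c 1 1 - c 0 1 * c 1 0) ≠ 0 := left_ne_zero_of_mul_eq_one hm
        have hu : c 1 0 * c 2 2 - c 1 2 * c 2 0 ≠ 0 := by
          rw [h20]
          simpa using mul_ne_zero h10 hc22
        set x : Mat3 := !![1,0,0; 0,0,0; 0,0,0] with hxd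
        set y : Mat3 := !![0,1,0; 0,0,0; 0,0,0] with hyd
        have hxm : x ∈ borel3 := mem_borel3 x (by simp [hxd, Matrix.vecHead, Matrix.vecTail]) (by simp [hxd, Matrix.vecHead, Matrix.vecTail]) (by simp [hxd, Matrix.vecHead, Matrix.vecTail])
        have hym : y ∈ borel3 := mem_borel3 y (by simp [hyd, Matrix.vecHead, Matrix.vecTail]) (by simp [hyd, Matrix.vecHead, Matrix.vecTail]) (by simp [hyd, Matrix.vecHead, Matrix.vecTail])
        have hf1x : f1 c x = -(c 1 0 * c 2 2 - c 1 2 * c 2 0) * c 0 0 := by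
          rw [f1_eq c x hc (by simp [hxd, Matrix.vecHead, Matrix.vecTail]) (by simp [hxd, Matrix.vecHead, Matrix.vecTail]) (by simp [hxd, Matrix.vecHead, Matrix.vecTail])]
          simp [hxd, Matrix.vecHead, Matrix.vecTail]; try ring
        have hf2x : f2 c x = -(c 1 0 * c 2 2 - c 1 2 * c 2 0) * c 0 1 := by
          rw [f2_eq c x hc (by simp [hxd, Matrix.vecHead, Matrix.vecTail]) (by simp [hxd, Matrix.vecHead, Matrix.vecTail]) (by simp [hxd, Matrix.vecHead, Matrix.vecTail])]
          simp [hxd, Matrix.vecHead, Matrix.vecTail]; try ring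
        have hf1y : f1 c y = -(c 1 0 * c 2 2 - c 1 2 * c 2 0) * c 1 0 := by
          rw [f1_eq c y hc (by simp [hyd, Matrix.vecHead, Matrix.vecTail]) (by simp [hyd, Matrix.vecHead, Matrix.vecTail]) (by simp [hyd, Matrix.vecHead, Matrix.vecTail])]
          simp [hyd, Matrix.vecHead, Matrix.vecTail]; try ring
        have hf2y : f2 c y = -(c 1 0 * c 2 2 - c 1 2 * c 2 0) * c 1 1 := by
          rw [f2_eq c y hc (by simp [hyd, Matrix.vecHead, Matrix.vecTail]) (by simp [hyd, Matrix.vecHead, Matrix.vecTail]) (by simp [hyd, Matrix.vecHead, Matrix.vecTail])]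
          simp [hyd, Matrix.vecHead, Matrix.vecTail]; try ring
        refine dim_four c (F1 c) (F2 c) ?_ x y hxm hym ?_
        · intro X hX
          have e10 : X 1 0 = 0 := hX 1 0 (by decide)
          have e20 : X 2 0 = 0 := hX 2 0 (by decide)
          have e21 : X 2 1 = 0 := hX 2 1 (by decide)
          have hh2X : h2 c X = 0 := by
            rw [h2_eq c X hc e10 e20 e21, h20, h21]; ring
          rw [F1_apply, F2_apply]
          exact ⟨fun ⟨a, b⟩ => ⟨a, b, hh2X⟩, fun ⟨a, b, _⟩ => ⟨a, b⟩⟩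
        · rw [F1_apply, F1_apply, F2_apply, F2_apply, hf1x, hf2y, hf1y, hf2x]
          intro h0
          exact mul_ne_zero (pow_ne_zero 2 hu) hmne (by linear_combination h0)
      · -- Case 2 : c 2 0 = 0, c 2 1 ≠ 0, pair (f2, h2)
        have hqr : ¬((c 0 0 * c 2 1 - c 0 1 * c 2 0) = 0
            ∧ (c 1 0 * c 2 1 - c 1 1 * c 2 0) = 0) := by
          rintro ⟨hq, hr⟩
          exact h21 (by linear_combination (c 1 1 * c 2 2 - c 1 2 * c 2 1) * hq
            + (c 0 2 * c 2 1 - c 0 1 * c 2 2) * hr - c 2 1 * hd)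
        set x : Mat3 := !![0,0,-(starRingEnd ℂ) (c 1 0 * c 2 2 - c 1 2 * c 2 0);
            0,0,(starRingEnd ℂ) (c 0 0 * c 2 2 - c 0 2 * c 2 0);
            0,0,-(starRingEnd ℂ) (c 0 0 * c 1 2 - c 0 2 * c 1 0)] with hxd
        set y : Mat3 := !![(starRingEnd ℂ) (c 0 0 * c 2 1 - c 0 1 * c 2 0),
            (starRingEnd ℂ) (c 1 0 * c 2 1 - c 1 1 * c 2 0), 0; 0,0,0; 0,0,0] with hyd
        have hxm : x ∈ borel3 := mem_borel3 x (by simp [hxd, Matrix.vecHead, Matrix.vecTail]) (by simp [hxd, Matrix.vecHead, Matrix.vecTail]) (by simp [hxd, Matrix.vecHead, Matrix.vecTail])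
        have hym : y ∈ borel3 := mem_borel3 y (by simp [hyd, Matrix.vecHead, Matrix.vecTail]) (by simp [hyd, Matrix.vecHead, Matrix.vecTail]) (by simp [hyd, Matrix.vecHead, Matrix.vecTail])
        have hf2x : f2 c x = c 2 1 *
            ((starRingEnd ℂ) (c 1 0 * c 2 2 - c 1 2 * c 2 0) * (c 1 0 * c 2 2 - c 1 2 * c 2 0)
            + (starRingEnd ℂ) (c 0 0 * c 2 2 - c 0 2 * c 2 0) * (c 0 0 * c 2 2 - c 0 2 * c 2 0)
            + (starRingEnd ℂ) (c 0 0 * c 1 2 - c 0 2 * c 1 0)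
              * (c 0 0 * c 1 2 - c 0 2 * c 1 0)) := by
          rw [f2_eq c x hc (by simp [hxd, Matrix.vecHead, Matrix.vecTail]) (by simp [hxd, Matrix.vecHead, Matrix.vecTail]) (by simp [hxd, Matrix.vecHead, Matrix.vecTail])]
          simp [hxd, Matrix.vecHead, Matrix.vecTail]; try ring
        have hh2x : h2 c x = 0 := by
          rw [h2_eq c x hc (by simp [hxd, Matrix.vecHead, Matrix.vecTail]) (by simp [hxd, Matrix.vecHead, Matrix.vecTail]) (by simp [hxd, Matrix.vecHead, Matrix.vecTail])]
          simp [hxd, Matrix.vecHead, Matrix.vecTail]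
        have hh2y : h2 c y =
            (starRingEnd ℂ) (c 0 0 * c 2 1 - c 0 1 * c 2 0) * (c 0 0 * c 2 1 - c 0 1 * c 2 0)
            + (starRingEnd ℂ) (c 1 0 * c 2 1 - c 1 1 * c 2 0)
              * (c 1 0 * c 2 1 - c 1 1 * c 2 0) := by
          rw [h2_eq c y hc (by simp [hyd, Matrix.vecHead, Matrix.vecTail]) (by simp [hyd, Matrix.vecHead, Matrix.vecTail]) (by simp [hyd, Matrix.vecHead, Matrix.vecTail])]
          simp [hyd, Matrix.vecHead, Matrix.vecTail]; try ring
        refine dim_four c (F2 c) (H2 c) ?_ x y hxm hym ?_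
        · intro X hX
          have e10 : X 1 0 = 0 := hX 1 0 (by decide)
          have e20 : X 2 0 = 0 := hX 2 0 (by decide)
          have e21 : X 2 1 = 0 := hX 2 1 (by decide)
          have hrel := relation c X hc e10 e20 e21
          rw [F2_apply, H2_apply]
          constructor
          · rintro ⟨ha, hb⟩
            refine ⟨?_, ha, hb⟩
            have hz : c 2 1 * f1 c X = 0 := by
              linear_combination hrel + c 2 0 * ha
                - (c 1 0 * c 2 2 - c 1 2 * c 2 0) * hb
            exact (mul_eq_zero.mp hz).resolve_left h21
          · rintro ⟨_, ha, hb⟩; exact ⟨ha, hb⟩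
        · rw [F2_apply, F2_apply, H2_apply, H2_apply, hf2x, hh2y, hh2x, mul_zero, sub_zero]
          refine mul_ne_zero (mul_ne_zero h21 (conj_sum_ne _ _ _ huvw)) ?_
          have h3 := conj_sum_ne (c 0 0 * c 2 1 - c 0 1 * c 2 0)
            (c 1 0 * c 2 1 - c 1 1 * c 2 0) 0 (by tauto)
          simpa using h3
    · -- Case 1 : c 2 0 ≠ 0, pair (f1, h2)
      have hqr : ¬((c 0 0 * c 2 1 - c 0 1 * c 2 0) = 0
          ∧ (c 1 0 * c 2 1 - c 1 1 * c 2 0) = 0) := by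
        rintro ⟨hq, hr⟩
        exact h20 (by linear_combination (c 1 0 * c 2 2 - c 1 2 * c 2 0) * hq
          - (c 0 0 * c 2 2 - c 0 2 * c 2 0) * hr - c 2 0 * hd)
      set x : Mat3 := !![0,0,-(starRingEnd ℂ) (c 1 0 * c 2 2 - c 1 2 * c 2 0);
          0,0,(starRingEnd ℂ) (c 0 0 * c 2 2 - c 0 2 * c 2 0);
          0,0,-(starRingEnd ℂ) (c 0 0 * c 1 2 - c 0 2 * c 1 0)] with hxd
      set y : Mat3 := !![(starRingEnd ℂ) (c 0 0 * c 2 1 - c 0 1 * c 2 0),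
          (starRingEnd ℂ) (c 1 0 * c 2 1 - c 1 1 * c 2 0), 0; 0,0,0; 0,0,0] with hyd
      have hxm : x ∈ borel3 := mem_borel3 x (by simp [hxd, Matrix.vecHead, Matrix.vecTail]) (by simp [hxd, Matrix.vecHead, Matrix.vecTail]) (by simp [hxd, Matrix.vecHead, Matrix.vecTail])
      have hym : y ∈ borel3 := mem_borel3 y (by simp [hyd, Matrix.vecHead, Matrix.vecTail]) (by simp [hyd, Matrix.vecHead, Matrix.vecTail]) (by simp [hyd, Matrix.vecHead, Matrix.vecTail])
      have hf1x : f1 c x = c 2 0 *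
          ((starRingEnd ℂ) (c 1 0 * c 2 2 - c 1 2 * c 2 0) * (c 1 0 * c 2 2 - c 1 2 * c 2 0)
          + (starRingEnd ℂ) (c 0 0 * c 2 2 - c 0 2 * c 2 0) * (c 0 0 * c 2 2 - c 0 2 * c 2 0)
          + (starRingEnd ℂ) (c 0 0 * c 1 2 - c 0 2 * c 1 0)
            * (c 0 0 * c 1 2 - c 0 2 * c 1 0)) := by
        rw [f1_eq c x hc (by simp [hxd, Matrix.vecHead, Matrix.vecTail]) (by simp [hxd, Matrix.vecHead, Matrix.vecTail]) (by simp [hxd, Matrix.vecHead, Matrix.vecTail])]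
        simp [hxd, Matrix.vecHead, Matrix.vecTail]; try ring
      have hh2x : h2 c x = 0 := by
        rw [h2_eq c x hc (by simp [hxd, Matrix.vecHead, Matrix.vecTail]) (by simp [hxd, Matrix.vecHead, Matrix.vecTail]) (by simp [hxd, Matrix.vecHead, Matrix.vecTail])]
        simp [hxd, Matrix.vecHead, Matrix.vecTail]
      have hh2y : h2 c y =
          (starRingEnd ℂ) (c 0 0 * c 2 1 - c 0 1 * c 2 0) * (c 0 0 * c 2 1 - c 0 1 * c 2 0)
          + (starRingEnd ℂ) (c 1 0 * c 2 1 - c 1 1 * c 2 0)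
            * (c 1 0 * c 2 1 - c 1 1 * c 2 0) := by
        rw [h2_eq c y hc (by simp [hyd, Matrix.vecHead, Matrix.vecTail]) (by simp [hyd, Matrix.vecHead, Matrix.vecTail]) (by simp [hyd, Matrix.vecHead, Matrix.vecTail])]
        simp [hyd, Matrix.vecHead, Matrix.vecTail]; try ring
      refine dim_four c (F1 c) (H2 c) ?_ x y hxm hym ?_
      · intro X hX
        have e10 : X 1 0 = 0 := hX 1 0 (by decide)
        have e20 : X 2 0 = 0 := hX 2 0 (by decide)
        have e21 : X 2 1 = 0 := hX 2 1 (by decide)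
        have hrel := relation c X hc e10 e20 e21
        rw [F1_apply, H2_apply]
        constructor
        · rintro ⟨ha, hb⟩
          refine ⟨ha, ?_, hb⟩
          have hz : c 2 0 * f2 c X = 0 := by
            linear_combination -hrel + c 2 1 * ha
              + (c 1 0 * c 2 2 - c 1 2 * c 2 0) * hb
          exact (mul_eq_zero.mp hz).resolve_left h20
        · rintro ⟨ha, _, hb⟩; exact ⟨ha, hb⟩
      · rw [F1_apply, F1_apply, H2_apply, H2_apply, hf1x, hh2y, hh2x, mul_zero, sub_zero]
        refine mul_ne_zero (mul_ne_zero h20 (conj_sum_ne _ _ _ huvw)) ?_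
        have h3 := conj_sum_ne (c 0 0 * c 2 1 - c 0 1 * c 2 0)
          (c 1 0 * c 2 1 - c 1 1 * c 2 0) 0 (by tauto)
        simpa using h3
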